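/- (Claim 4.6.) There is an absolute constant c > 0 such that for every deterministic dynamic retrieval scheme (F, G, Query) in the model and every real S ≥ H(F): if i is drawn uniformly from {1, …, n/2}, independently of the process, then the expected size of the plausible set satisfies E_{i, A, R_A, R_{B₀}}[ |P_i(F(A, R_A, R_{B₀}))| ] ≥ ((u − n/2)/(n/2)) · 2^{−(2S − 2nv)/n − c}. -/

import Mathlib

noncomputable section

namespace DynRetrieval

/-! ### Entropy on a finite sample space with the uniform distribution -/

/-- The probability of an event `s` under the uniform distribution on a finite type `Ω`. -/
def unifPr (Ω : Type*) [Fintype Ω] (s : Set Ω) : ℝ :=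
  (Nat.card s : ℝ) / (Fintype.card Ω : ℝ)

/-- The Shannon entropy (in bits) of a random variable `X` defined on a finite sample
space `Ω` carrying the uniform distribution. -/
def entropy {Ω : Type*} {α : Type*} [Fintype Ω] (X : Ω → α) : ℝ :=
  (∑ ω : Ω, -Real.logb 2 (unifPr Ω {ω' | X ω' = X ω})) / (Fintype.card Ω : ℝ)

/-- The conditional Shannon entropy `H(X | Y) = H(X, Y) − H(Y)` (in bits). -/
def condEntropy {Ω : Type*} {α β : Type*} [Fintype Ω] (X : Ω → α) (Y : Ω → β) : ℝ :=
  entropy (fun ω => (X ω, Y ω)) - entropy Y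

/-- The first bit of a `v`-bit string. -/
def firstBit {v : ℕ} (r : Fin v → Bool) : Bool :=
  if h : 0 < v then r ⟨0, h⟩ else false

/-! ### The dynamic random process

Parameters `n v u`, with `n` even, `u ≥ n³`, and `u − n/2` divisible by `n/2`.
The set `[u] \ [n/2]` is split into `n/2` consecutive parts, each of size
`2u/n − 1 = (u − n/2)/(n/2)`.  An element of the `i`-th part is identified by its
position `a` inside the part; as a (0-indexed) natural number it is the key
`n/2 + i·((u − n/2)/(n/2)) + a`.  The keys `0, …, n/2 − 1` form the set `B₀`. -/

variable (n v u : ℕ)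

/-- The number of parts, `n/2`. -/
def K : ℕ := n / 2

/-- The size of each part, `(u − n/2)/(n/2) = 2u/n − 1`. -/
def W : ℕ := (u - n / 2) / (n / 2)

/-- The key (element of `[u] \ [n/2]`, 0-indexed) at position `a` of part `i`. -/
def key (i : Fin (K n)) (a : Fin (W n u)) : ℕ := n / 2 + (i : ℕ) * W n u + (a : ℕ)

/-- The model hypotheses on the parameters: `n` even with `n ≥ 4`, `v ≥ 1`, `u ≥ n³`,
and `u − n/2` divisible by `n/2`. -/
def Hyp : Prop :=
  n % 2 = 0 ∧ 4 ≤ n ∧ 1 ≤ v ∧ n ^ 3 ≤ u ∧ n / 2 ∣ (u - n / 2)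

/-- Raw data of a realization of the first stage of the process: `(A, R_A, R_{B₀})`.
`A i` is (the position of) the element of `A` in part `i`, `R_A i` its `v`-bit value, and
`R_{B₀} i` the `v`-bit value of the key `i ∈ B₀ = {0, …, n/2 − 1}`. -/
abbrev FData : Type :=
  (Fin (K n) → Fin (W n u)) × (Fin (K n) → Fin v → Bool) × (Fin (K n) → Fin v → Bool)

/-- Validity of a realization `(A, R_A, R_{B₀})`: every value of `R_A` has first bit `1`
(`A` and `R_{B₀}` are unconstrained). -/
def ValidF (d : FData n v u) : Prop := ∀ j, firstBit (d.2.1 j) = true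

/-- Raw data of a full realization of the dynamic random process:
`((A, R_A, R_{B₀}), (B, R_B))`. -/
abbrev DynData : Type :=
  FData n v u × ((Fin (K n) → Fin (W n u)) × (Fin (K n) → Fin v → Bool))

/-- Validity of a full realization: `R_A` has first bits `1`, `B` avoids `A` in each
part, and `R_B` has first bits `0`. -/
def DynValid (d : DynData n v u) : Prop :=
  ValidF n v u d.1 ∧ (∀ j, d.2.1 j ≠ d.1.1 j) ∧ ∀ j, firstBit (d.2.2 j) = false

/-- The sample space of the dynamic random process: since every random choice in the
process is uniform (subject to the stated constraints, whose number of options does not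
depend on the previous choices), the joint distribution of `(A, R_A, R_{B₀}, B, R_B)` is
the uniform distribution on the set of valid realizations. -/
abbrev DynOmega : Type := {d : DynData n v u // DynValid n v u d}

noncomputable instance : Fintype (DynOmega n v u) := Fintype.ofFinite _

/-- The type of the (deterministic) map `F`, building a bit string from a realization of
`(A, R_A, R_{B₀})`. -/
abbrev FBuilder : Type :=
  (Fin (K n) → Fin (W n u)) → (Fin (K n) → Fin v → Bool) →
    (Fin (K n) → Fin v → Bool) → List Bool

/-- The type of the (deterministic) map `G`, building a bit string from a bit string
together with a realization of `(B, R_B)`. -/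
abbrev GBuilder : Type :=
  List Bool → (Fin (K n) → Fin (W n u)) → (Fin (K n) → Fin v → Bool) → List Bool

/-- The type of the (deterministic) query map: a bit string and a key give a `v`-bit
value. -/
abbrev QueryFn (v : ℕ) : Type := List Bool → ℕ → Fin v → Bool

/-- The random bit string `F = F(A, R_A, R_{B₀})`. -/
def Frv (F : FBuilder n v u) (ω : DynOmega n v u) : List Bool :=
  F ω.1.1.1 ω.1.1.2.1 ω.1.1.2.2

/-- The random bit string `G = G(F(A, R_A, R_{B₀}), B, R_B)`. -/
def Grv (F : FBuilder n v u) (G : GBuilder n v u) (ω : DynOmega n v u) : List Bool :=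
  G (Frv n v u F ω) ω.1.2.1 ω.1.2.2

/-- The random variable `B`. -/
def Brv (ω : DynOmega n v u) : Fin (K n) → Fin (W n u) := ω.1.2.1

/-- Correctness of a dynamic retrieval scheme `(F, G, Query)`: on every realization in
the support of the process, querying `F(A, R_A, R_{B₀})` with a key of `A ∪ B₀` returns
its value, and querying `G(F(A, R_A, R_{B₀}), B, R_B)` with a key of `A ∪ B` returns its
value. -/
def Correct (F : FBuilder n v u) (G : GBuilder n v u) (Q : QueryFn v) : Prop :=
  ∀ ω : DynOmega n v u,
    (∀ i, Q (Frv n v u F ω) (key n u i (ω.1.1.1 i)) = ω.1.1.2.1 i) ∧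
    (∀ i : Fin (K n), Q (Frv n v u F ω) (i : ℕ) = ω.1.1.2.2 i) ∧
    (∀ i, Q (Grv n v u F G ω) (key n u i (ω.1.1.1 i)) = ω.1.1.2.1 i) ∧
    (∀ i, Q (Grv n v u F G ω) (key n u i (ω.1.2.1 i)) = ω.1.2.2 i)

/-- The plausible set `P_i(f)`: all triples `(x, r_x, r_i)` of an element `x` of part
`i`, a `v`-bit value `r_x` with first bit `1`, and a `v`-bit value `r_i`, such that some
realization `(A', R'_{A'}, R'_{B₀})` in the support of `(A, R_A, R_{B₀})` has
`F(A', R'_{A'}, R'_{B₀}) = f`, `x` the element of `A'` in part `i` with value `r_x`, and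
`r_i` the value of the key `i ∈ B₀` in `R'_{B₀}`. -/
def Plausible (F : FBuilder n v u) (f : List Bool) (i : Fin (K n)) :
    Set (Fin (W n u) × (Fin v → Bool) × (Fin v → Bool)) :=
  {p | ∃ d : FData n v u, ValidF n v u d ∧ F d.1 d.2.1 d.2.2 = f ∧
        d.1 i = p.1 ∧ d.2.1 i = p.2.1 ∧ d.2.2 i = p.2.2}

/-- A triple `(x, r_x, r_i) ∈ P_i(f)` *remains feasible after `B`* if the witness
`(A', R'_{A'}, R'_{B₀})` can additionally be chosen with `A' ∩ B = ∅`. -/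
def Feasible (F : FBuilder n v u) (f : List Bool) (i : Fin (K n))
    (B : Fin (K n) → Fin (W n u)) (p : Fin (W n u) × (Fin v → Bool) × (Fin v → Bool)) :
    Prop :=
  ∃ d : FData n v u, ValidF n v u d ∧ F d.1 d.2.1 d.2.2 = f ∧
    d.1 i = p.1 ∧ d.2.1 i = p.2.1 ∧ d.2.2 i = p.2.2 ∧ ∀ j, B j ≠ d.1 j

end DynRetrieval

namespace DynRetrieval

section ClaimProof

open Finset Real

variable {n v u : ℕ}

instance : DecidablePred (ValidF n v u) :=
  fun d => decidable_of_iff (∀ j, firstBit (d.2.1 j) = true) Iff.rfl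

/-- The value of `F` on a raw first-stage realization. -/
def Fval (F : FBuilder n v u) (d : FData n v u) : List Bool := F d.1 d.2.1 d.2.2

/-- The number of valid first-stage realizations mapped by `F` to `f`. -/
def NF (F : FBuilder n v u) (f : List Bool) : ℕ :=
  Nat.card {a : {d : FData n v u // ValidF n v u d} | Fval F a.1 = f}

lemma natCard_setOf_eq_sum {Ω : Type*} [Fintype Ω] (p : Ω → Prop) [DecidablePred p] :
    ((Nat.card {x : Ω | p x} : ℝ)) = ∑ x : Ω, if p x then (1 : ℝ) else 0 := by
  classical
  rw [Finset.sum_boole]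
  norm_cast
  rw [Nat.card_eq_fintype_card]
  exact Fintype.card_subtype p

lemma card_firstBit_subtype (hv : 1 ≤ v) (b : Bool) :
    Fintype.card {r : Fin v → Bool // firstBit r = b} = 2 ^ (v - 1) := by
  classical
  have h0 : 0 < v := hv
  let i0 : Fin v := ⟨0, h0⟩
  have e1 : {r : Fin v → Bool // firstBit r = b} ≃
      {p : Bool × ({j : Fin v // j ≠ i0} → Bool) // p.1 = b} :=
    Equiv.subtypeEquiv (Equiv.piSplitAt i0 fun _ => Bool) (fun r => by
      simp only [firstBit, dif_pos h0, Equiv.piSplitAt]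
      exact Iff.rfl)
  have e2 : {p : Bool × ({j : Fin v // j ≠ i0} → Bool) // p.1 = b} ≃
      ({j : Fin v // j ≠ i0} → Bool) :=
    { toFun := fun p => p.1.2
      invFun := fun x => ⟨(b, x), rfl⟩
      left_inv := fun p => Subtype.ext (Prod.ext p.2.symm rfl)
      right_inv := fun x => rfl }
  rw [Fintype.card_congr (e1.trans e2)]
  have hcard : Fintype.card {j : Fin v // j ≠ i0} = v - 1 := by
    rw [Fintype.card_subtype_compl, Fintype.card_subtype_eq, Fintype.card_fin]
  rw [Fintype.card_fun, hcard, Fintype.card_bool]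

/-- Valid first-stage realizations, as a product type. -/
def validEquiv (n v u : ℕ) : {d : FData n v u // ValidF n v u d} ≃
    ((Fin (K n) → Fin (W n u)) × (Fin (K n) → {r : Fin v → Bool // firstBit r = true}) ×
      (Fin (K n) → Fin v → Bool)) where
  toFun d := ⟨d.1.1, fun j => ⟨d.1.2.1 j, d.2 j⟩, d.1.2.2⟩
  invFun x := ⟨⟨x.1, fun j => (x.2.1 j).1, x.2.2⟩, fun j => (x.2.1 j).2⟩
  left_inv d := rfl
  right_inv x := rfl

lemma card_valid (hv : 1 ≤ v) :
    Fintype.card {d : FData n v u // ValidF n v u d}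
      = (W n u * (2 ^ (v - 1) * 2 ^ v)) ^ K n := by
  classical
  rw [Fintype.card_congr (validEquiv n v u)]
  simp [Fintype.card_fun, card_firstBit_subtype hv, mul_pow]

/-- The fiber of the second-stage data over a valid first-stage realization. -/
abbrev fiberT (a : {d : FData n v u // ValidF n v u d}) : Type _ :=
  (∀ _j : Fin (K n), {x : Fin (W n u) // x ≠ a.1.1 _j}) ×
    {rb : Fin (K n) → Fin v → Bool // ∀ j, firstBit (rb j) = false}

/-- The sample space as a sigma type over valid first-stage realizations. -/
def omegaEquiv (n v u : ℕ) :
    DynOmega n v u ≃ Σ a : {d : FData n v u // ValidF n v u d}, fiberT a where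
  toFun ω := ⟨⟨ω.1.1, ω.2.1⟩, ⟨fun j => ⟨ω.1.2.1 j, ω.2.2.1 j⟩, ⟨ω.1.2.2, ω.2.2.2⟩⟩⟩
  invFun σ := ⟨⟨σ.1.1, ⟨fun j => (σ.2.1 j).1, σ.2.2.1⟩⟩, ⟨σ.1.2, fun j => (σ.2.1 j).2, σ.2.2.2⟩⟩
  left_inv ω := rfl
  right_inv σ := rfl

lemma card_fiberT (hv : 1 ≤ v) (a : {d : FData n v u // ValidF n v u d}) :
    Fintype.card (fiberT a) = ((W n u - 1) * 2 ^ (v - 1)) ^ K n := by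
  classical
  have h1 : ∀ j : Fin (K n), Fintype.card {x : Fin (W n u) // x ≠ a.1.1 j} = W n u - 1 := by
    intro j
    rw [Fintype.card_subtype_compl, Fintype.card_subtype_eq, Fintype.card_fin]
  have h2 : Fintype.card {rb : Fin (K n) → Fin v → Bool // ∀ j, firstBit (rb j) = false}
      = (2 ^ (v - 1)) ^ K n := by
    rw [Fintype.card_congr (Equiv.subtypePiEquivPi (p := fun _ r => firstBit r = false))]
    simp [card_firstBit_subtype hv]
  rw [Fintype.card_prod, Fintype.card_pi, h2]
  simp [h1, mul_pow]
/-- Transfer of sums from the full sample space to the first-stage data. -/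
lemma sum_omega_eq (hv : 1 ≤ v) (g : {d : FData n v u // ValidF n v u d} → ℝ) :
    ∑ ω : DynOmega n v u, g ⟨ω.1.1, ω.2.1⟩
      = ((((W n u - 1) * 2 ^ (v - 1)) ^ K n : ℕ) : ℝ) *
          ∑ a : {d : FData n v u // ValidF n v u d}, g a := by
  classical
  rw [Fintype.sum_equiv (omegaEquiv n v u) (fun ω : DynOmega n v u => g ⟨ω.1.1, ω.2.1⟩)
    (fun σ => g σ.1) (fun ω => rfl)]
  rw [← Finset.univ_sigma_univ, Finset.sum_sigma]
  simp only [Finset.sum_const, Finset.card_univ, nsmul_eq_mul]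
  rw [Finset.mul_sum]
  congr 1
  ext a
  rw [card_fiberT hv a]

lemma card_omega (hv : 1 ≤ v) :
    ((Fintype.card (DynOmega n v u) : ℕ) : ℝ)
      = ((((W n u - 1) * 2 ^ (v - 1)) ^ K n : ℕ) : ℝ) *
          ((Fintype.card {d : FData n v u // ValidF n v u d} : ℕ) : ℝ) := by
  have := sum_omega_eq (n := n) (u := u) hv (fun _ => (1 : ℝ))
  simpa [Finset.card_univ, mul_comm] using this

lemma natCard_Frv_fiber (hv : 1 ≤ v) (F : FBuilder n v u) (f : List Bool) :
    ((Nat.card {ω' : DynOmega n v u | Frv n v u F ω' = f} : ℕ) : ℝ)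
      = ((((W n u - 1) * 2 ^ (v - 1)) ^ K n : ℕ) : ℝ) * ((NF F f : ℕ) : ℝ) := by
  classical
  rw [natCard_setOf_eq_sum (fun ω' : DynOmega n v u => Frv n v u F ω' = f)]
  rw [NF, natCard_setOf_eq_sum (fun a : {d : FData n v u // ValidF n v u d} => Fval F a.1 = f)]
  exact sum_omega_eq hv (fun a => if Fval F a.1 = f then (1 : ℝ) else 0)
lemma valid_nonempty (hv : 1 ≤ v) (hW : 1 ≤ W n u) :
    Nonempty {d : FData n v u // ValidF n v u d} := by
  refine ⟨⟨⟨fun _ => ⟨0, hW⟩, fun _ _ => true, fun _ _ => true⟩, fun j => ?_⟩⟩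
  simp [firstBit, Nat.lt_of_lt_of_le Nat.zero_lt_one hv]

lemma one_le_NF (F : FBuilder n v u) (a : {d : FData n v u // ValidF n v u d}) :
    1 ≤ NF F (Fval F a.1) := by
  have : Nonempty {b : {d : FData n v u // ValidF n v u d} | Fval F b.1 = Fval F a.1} :=
    ⟨⟨a, rfl⟩⟩
  exact Nat.card_pos

lemma mem_plausible_self (F : FBuilder n v u) (a : {d : FData n v u // ValidF n v u d})
    (i : Fin (K n)) :
    (a.1.1 i, a.1.2.1 i, a.1.2.2 i) ∈ Plausible n v u F (Fval F a.1) i :=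
  ⟨a.1, a.2, rfl, rfl, rfl, rfl⟩

lemma one_le_card_plausible (F : FBuilder n v u) (a : {d : FData n v u // ValidF n v u d})
    (i : Fin (K n)) :
    1 ≤ Nat.card (Plausible n v u F (Fval F a.1) i) := by
  have : Nonempty (Plausible n v u F (Fval F a.1) i) := ⟨_, mem_plausible_self F a i⟩
  exact Nat.card_pos

lemma NF_le_prod (F : FBuilder n v u) (f : List Bool) :
    NF F f ≤ ∏ i : Fin (K n), Nat.card (Plausible n v u F f i) := by
  classical
  rw [← Nat.card_pi]
  refine Nat.card_le_card_of_injective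
    (fun a : {b : {d : FData n v u // ValidF n v u d} | Fval F b.1 = f} =>
      fun i => (⟨(a.1.1.1 i, a.1.1.2.1 i, a.1.1.2.2 i),
        ⟨a.1.1, a.1.2, a.2, rfl, rfl, rfl⟩⟩ : Plausible n v u F f i)) ?_
  intro a b h
  have h1 : ∀ i : Fin (K n), a.1.1.1 i = b.1.1.1 i ∧ a.1.1.2.1 i = b.1.1.2.1 i ∧
      a.1.1.2.2 i = b.1.1.2.2 i := by
    intro i
    have := congrFun h i
    rw [Subtype.ext_iff] at this
    simpa [Prod.ext_iff] using this
  refine Subtype.ext (Subtype.ext ?_)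
  refine Prod.ext (funext fun i => (h1 i).1) (Prod.ext (funext fun i => (h1 i).2.1)
    (funext fun i => (h1 i).2.2))
lemma entropy_Frv_eq (hv : 1 ≤ v) (hW : 2 ≤ W n u) (F : FBuilder n v u) :
    entropy (Frv n v u F)
      = Real.logb 2 (Fintype.card {d : FData n v u // ValidF n v u d})
        - (∑ a : {d : FData n v u // ValidF n v u d}, Real.logb 2 (NF F (Fval F a.1)))
            / (Fintype.card {d : FData n v u // ValidF n v u d} : ℝ) := by
  classical
  have hW1 : 1 ≤ W n u := le_trans (by norm_num) hW
  have hNe : Nonempty {d : FData n v u // ValidF n v u d} := valid_nonempty hv hW1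
  set N : ℝ := (Fintype.card {d : FData n v u // ValidF n v u d} : ℝ) with hNdef
  set L : ℝ := ((((W n u - 1) * 2 ^ (v - 1)) ^ K n : ℕ) : ℝ) with hLdef
  have hN0 : 0 < N := by
    rw [hNdef]
    exact_mod_cast (Fintype.card_pos (α := {d : FData n v u // ValidF n v u d}))
  have hL0 : 0 < L := by
    rw [hLdef]
    have : 0 < ((W n u - 1) * 2 ^ (v - 1)) ^ K n := by
      apply pow_pos
      apply Nat.mul_pos
      · omega
      · exact Nat.pow_pos (by norm_num)
    exact_mod_cast this
  have hM : ((Fintype.card (DynOmega n v u) : ℕ) : ℝ) = L * N := card_omega hv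
  have key : ∀ ω : DynOmega n v u,
      unifPr (DynOmega n v u) {ω' | Frv n v u F ω' = Frv n v u F ω}
        = (NF F (Fval F ω.1.1) : ℝ) / N := by
    intro ω
    rw [unifPr, hM, natCard_Frv_fiber hv F (Frv n v u F ω)]
    have : Frv n v u F ω = Fval F ω.1.1 := rfl
    rw [this, mul_div_mul_left _ _ (ne_of_gt hL0)]
  rw [entropy]
  have hsum : ∑ ω : DynOmega n v u,
      -Real.logb 2 (unifPr (DynOmega n v u) {ω' | Frv n v u F ω' = Frv n v u F ω})
      = L * ∑ a : {d : FData n v u // ValidF n v u d},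
          -Real.logb 2 ((NF F (Fval F a.1) : ℝ) / N) := by
    rw [← sum_omega_eq hv (fun a => -Real.logb 2 ((NF F (Fval F a.1) : ℝ) / N))]
    exact Finset.sum_congr rfl fun ω _ => by rw [key ω]
  rw [hsum, hM]
  rw [mul_div_mul_left _ _ (ne_of_gt hL0)]
  have hterm : ∀ a : {d : FData n v u // ValidF n v u d},
      -Real.logb 2 ((NF F (Fval F a.1) : ℝ) / N)
        = Real.logb 2 N - Real.logb 2 (NF F (Fval F a.1)) := by
    intro a
    have h1 : (NF F (Fval F a.1) : ℝ) ≠ 0 := by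
      have := one_le_NF F a
      positivity
    rw [Real.logb_div h1 (ne_of_gt hN0), neg_sub]
  simp only [hterm]
  rw [Finset.sum_sub_distrib, Finset.sum_const, Finset.card_univ, nsmul_eq_mul, sub_div,
    mul_div_assoc, ← hNdef]
  congr 1
  field_simp
lemma hyp_Kpos (h : Hyp n v u) : 0 < K n := by
  obtain ⟨-, h4, -, -, -⟩ := h
  have : 2 ≤ n / 2 := by omega
  simpa [K] using by omega

lemma hyp_Kreal (h : Hyp n v u) : ((K n : ℕ) : ℝ) = (n : ℝ) / 2 := by
  obtain ⟨h2, h4, -, -, -⟩ := h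
  have hn : 2 * (n / 2) = n := by omega
  have : (2 : ℝ) * ((K n : ℕ) : ℝ) = (n : ℝ) := by
    rw [K]; exact_mod_cast congrArg (Nat.cast (R := ℝ)) hn
  linarith

lemma hyp_W2 (h : Hyp n v u) : 2 ≤ W n u := by
  obtain ⟨h2, h4, -, hu, hdvd⟩ := h
  have h3 : 2 * n ≤ n ^ 3 := by
    calc 2 * n ≤ n * n * n := by nlinarith
    _ = n ^ 3 := by ring
  have h5 : n + n / 2 ≤ u := le_trans (by omega) (le_trans h3 hu)
  have h6 : 2 * (n / 2) ≤ u - n / 2 := by omega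
  rw [W, Nat.le_div_iff_mul_le (by omega : 0 < n / 2)]
  omega

lemma hyp_Wreal (h : Hyp n v u) :
    (((u : ℝ) - (n : ℝ) / 2) / ((n : ℝ) / 2)) = ((W n u : ℕ) : ℝ) := by
  obtain ⟨h2, h4, -, hu, hdvd⟩ := h
  have h3 : 2 * n ≤ n ^ 3 := by
    calc 2 * n ≤ n * n * n := by nlinarith
    _ = n ^ 3 := by ring
  have h5 : n / 2 ≤ u := by omega
  have hWmul : W n u * (n / 2) = u - n / 2 := Nat.div_mul_cancel hdvd
  have hc : ((W n u : ℕ) : ℝ) * ((n / 2 : ℕ) : ℝ) = (u : ℝ) - ((n / 2 : ℕ) : ℝ) := by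
    rw [← Nat.cast_mul, hWmul, Nat.cast_sub h5]
  have hhalf : ((n / 2 : ℕ) : ℝ) = (n : ℝ) / 2 := by
    have hn : 2 * (n / 2) = n := by omega
    have : (2 : ℝ) * ((n / 2 : ℕ) : ℝ) = (n : ℝ) := by exact_mod_cast congrArg (Nat.cast (R := ℝ)) hn
    linarith
  rw [hhalf] at hc
  have hpos : (0 : ℝ) < (n : ℝ) / 2 := by
    have : (4 : ℝ) ≤ (n : ℝ) := by exact_mod_cast h4
    linarith
  rw [← hc, mul_div_cancel_right₀ _ (ne_of_gt hpos)]

lemma two_rpow_sum {ι : Type*} (s : Finset ι) (t : ι → ℝ) :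
    (2 : ℝ) ^ (∑ i ∈ s, t i) = ∏ i ∈ s, (2 : ℝ) ^ t i := by
  simp only [Real.rpow_def_of_pos (by norm_num : (0 : ℝ) < 2), Finset.mul_sum, Real.exp_sum]
lemma main_ineq (h : Hyp n v u) (F : FBuilder n v u) (S : ℝ)
    (hS : entropy (Frv n v u F) ≤ S) :
    (((u : ℝ) - (n : ℝ) / 2) / ((n : ℝ) / 2)) * 2 ^ (-(2 * S - 2 * (n : ℝ) * v) / n - 1) ≤
      (∑ i : Fin (K n), ∑ d : FData n v u,
          Set.indicator {d | ValidF n v u d}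
            (fun d => (Nat.card (Plausible n v u F (F d.1 d.2.1 d.2.2) i) : ℝ)) d) /
        ((K n : ℝ) * (Nat.card {d : FData n v u // ValidF n v u d} : ℝ)) := by
  classical
  have hv : 1 ≤ v := h.2.2.1
  have hW2 : 2 ≤ W n u := hyp_W2 h
  have hKpos : 0 < K n := hyp_Kpos h
  have hNe : Nonempty {d : FData n v u // ValidF n v u d} :=
    valid_nonempty hv (le_trans (by norm_num) hW2)
  set N : ℝ := (Fintype.card {d : FData n v u // ValidF n v u d} : ℝ) with hNdef
  set k : ℝ := ((K n : ℕ) : ℝ) with hkdef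
  have hN0 : (0 : ℝ) < N := by
    rw [hNdef]
    exact_mod_cast (Fintype.card_pos (α := {d : FData n v u // ValidF n v u d}))
  have hk0 : (0 : ℝ) < k := by rw [hkdef]; exact_mod_cast hKpos
  -- the random variable whose expectation we bound
  set x : Fin (K n) × {d : FData n v u // ValidF n v u d} → ℝ :=
    fun p => (Nat.card (Plausible n v u F (Fval F p.2.1) p.1) : ℝ) with hxdef
  have hx1 : ∀ p, (1 : ℝ) ≤ x p := by
    intro p
    simp only [hxdef]
    exact_mod_cast one_le_card_plausible F p.2 p.1
  have hxpos : ∀ p, (0 : ℝ) < x p := fun p => lt_of_lt_of_le one_pos (hx1 p)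
  set w0 : ℝ := 1 / (k * N) with hw0def
  have hw0 : 0 < w0 := by rw [hw0def]; positivity
  have hcardprod :
      ((Fintype.card (Fin (K n) × {d : FData n v u // ValidF n v u d}) : ℕ) : ℝ) = k * N := by
    rw [Fintype.card_prod, Fintype.card_fin]
    push_cast [hNdef, hkdef]
    ring
  have hsumw : ∑ _p : Fin (K n) × {d : FData n v u // ValidF n v u d}, w0 = 1 := by
    rw [Finset.sum_const, Finset.card_univ, nsmul_eq_mul, hcardprod, hw0def]
    field_simp
  -- AM-GM
  have hAM : ∏ p, x p ^ w0 ≤ ∑ p, w0 * x p :=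
    Real.geom_mean_le_arith_mean_weighted Finset.univ _ _ (fun _ _ => le_of_lt hw0) hsumw
      (fun p _ => le_of_lt (hxpos p))
  -- geometric mean as a power of 2
  have hprod : ∏ p, x p ^ w0 = 2 ^ (∑ p, w0 * Real.logb 2 (x p)) := by
    rw [two_rpow_sum]
    refine Finset.prod_congr rfl fun p _ => ?_
    rw [mul_comm]
    calc x p ^ w0 = ((2 : ℝ) ^ Real.logb 2 (x p)) ^ w0 := by
          rw [Real.rpow_logb (by norm_num) (by norm_num) (hxpos p)]
      _ = 2 ^ (Real.logb 2 (x p) * w0) := (Real.rpow_mul (by norm_num) _ _).symm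
  -- the exponent is at least (logb 2 N - S) / k
  have hNF : ∀ a : {d : FData n v u // ValidF n v u d},
      Real.logb 2 (NF F (Fval F a.1)) ≤ ∑ i : Fin (K n), Real.logb 2 (x (i, a)) := by
    intro a
    rw [← Real.logb_prod _ _ (fun i _ => ne_of_gt (hxpos (i, a)))]
    have hle : ((NF F (Fval F a.1) : ℕ) : ℝ) ≤ ∏ i : Fin (K n), x (i, a) := by
      have := NF_le_prod F (Fval F a.1)
      calc ((NF F (Fval F a.1) : ℕ) : ℝ)
          ≤ ((∏ i : Fin (K n), Nat.card (Plausible n v u F (Fval F a.1) i) : ℕ) : ℝ) := by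
            exact_mod_cast this
        _ = ∏ i : Fin (K n), x (i, a) := by rw [hxdef]; push_cast; rfl
    refine Real.logb_le_logb_of_le (by norm_num) ?_ hle
    exact_mod_cast one_le_NF F a
  have hHsum : N * (Real.logb 2 N - S)
      ≤ ∑ a : {d : FData n v u // ValidF n v u d}, Real.logb 2 (NF F (Fval F a.1)) := by
    have hent := entropy_Frv_eq hv hW2 F
    rw [hent] at hS
    have : Real.logb 2 N - S ≤
        (∑ a : {d : FData n v u // ValidF n v u d}, Real.logb 2 (NF F (Fval F a.1))) / N := by
      rw [← hNdef] at hS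
      linarith
    calc N * (Real.logb 2 N - S)
        ≤ N * ((∑ a : {d : FData n v u // ValidF n v u d},
            Real.logb 2 (NF F (Fval F a.1))) / N) := by
          exact mul_le_mul_of_nonneg_left this (le_of_lt hN0)
      _ = _ := by field_simp
  have hexp : (Real.logb 2 N - S) / k ≤ ∑ p, w0 * Real.logb 2 (x p) := by
    have hsum2 : ∑ p, w0 * Real.logb 2 (x p)
        = w0 * ∑ a : {d : FData n v u // ValidF n v u d},
            ∑ i : Fin (K n), Real.logb 2 (x (i, a)) := by
      rw [← Finset.mul_sum, Fintype.sum_prod_type, Finset.sum_comm]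
    have h1 : ∑ a : {d : FData n v u // ValidF n v u d}, Real.logb 2 (NF F (Fval F a.1))
        ≤ ∑ a : {d : FData n v u // ValidF n v u d},
            ∑ i : Fin (K n), Real.logb 2 (x (i, a)) :=
      Finset.sum_le_sum fun a _ => hNF a
    rw [hsum2]
    have h2 : N * (Real.logb 2 N - S) ≤ ∑ a : {d : FData n v u // ValidF n v u d},
        ∑ i : Fin (K n), Real.logb 2 (x (i, a)) := le_trans hHsum h1
    calc (Real.logb 2 N - S) / k = w0 * (N * (Real.logb 2 N - S)) := by
          rw [hw0def]; field_simp
      _ ≤ _ := mul_le_mul_of_nonneg_left h2 (le_of_lt hw0)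
  -- identify the left-hand side
  have hWpos : (0 : ℝ) < ((W n u : ℕ) : ℝ) := by
    have : (2 : ℝ) ≤ ((W n u : ℕ) : ℝ) := by exact_mod_cast hW2
    linarith
  have hlogN : Real.logb 2 N = k * (Real.logb 2 ((W n u : ℕ) : ℝ) + ((v : ℝ) - 1) + v) := by
    have hNval : N = (((W n u * (2 ^ (v - 1) * 2 ^ v)) ^ K n : ℕ) : ℝ) := by
      rw [hNdef, card_valid hv]
    rw [hNval]
    push_cast
    rw [Real.logb_pow, ← hkdef]
    congr 1
    rw [Real.logb_mul (ne_of_gt hWpos) (by positivity),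
      Real.logb_mul (by positivity) (by positivity)]
    have hp1 : Real.logb 2 ((2 : ℝ) ^ (v - 1)) = ((v - 1 : ℕ) : ℝ) := by
      rw [← Real.rpow_natCast 2 (v - 1), Real.logb_rpow (by norm_num) (by norm_num)]
    have hp2 : Real.logb 2 ((2 : ℝ) ^ v) = (v : ℝ) := by
      rw [← Real.rpow_natCast 2 v, Real.logb_rpow (by norm_num) (by norm_num)]
    rw [hp1, hp2, Nat.cast_sub hv]
    push_cast
    ring
  have hLHS : (((u : ℝ) - (n : ℝ) / 2) / ((n : ℝ) / 2)) *
      2 ^ (-(2 * S - 2 * (n : ℝ) * v) / n - 1) = 2 ^ ((Real.logb 2 N - S) / k) := by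
    rw [hyp_Wreal h]
    have hexpo : (Real.logb 2 N - S) / k
        = Real.logb 2 ((W n u : ℕ) : ℝ) + (-(2 * S - 2 * (n : ℝ) * v) / n - 1) := by
      rw [hlogN]
      have hkn : k = (n : ℝ) / 2 := by rw [hkdef]; exact hyp_Kreal h
      have hn0 : (0 : ℝ) < (n : ℝ) := by
        have : (4 : ℝ) ≤ (n : ℝ) := by exact_mod_cast h.2.1
        linarith
      rw [hkn]
      field_simp
      ring
    rw [hexpo, Real.rpow_add (by norm_num),
      Real.rpow_logb (by norm_num) (by norm_num) hWpos]
  -- the right-hand side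
  have hEsum : (∑ i : Fin (K n), ∑ d : FData n v u,
        Set.indicator {d | ValidF n v u d}
          (fun d => (Nat.card (Plausible n v u F (F d.1 d.2.1 d.2.2) i) : ℝ)) d)
      = ∑ p : Fin (K n) × {d : FData n v u // ValidF n v u d}, x p := by
    rw [Fintype.sum_prod_type]
    refine Finset.sum_congr rfl fun i _ => ?_
    have : ∀ d : FData n v u,
        Set.indicator {d | ValidF n v u d}
          (fun d => (Nat.card (Plausible n v u F (F d.1 d.2.1 d.2.2) i) : ℝ)) d
        = if ValidF n v u d
            then (Nat.card (Plausible n v u F (F d.1 d.2.1 d.2.2) i) : ℝ) else 0 := by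
      intro d
      rw [Set.indicator_apply]
      simp [Set.mem_setOf_eq]
    simp only [this]
    rw [← Finset.sum_filter]
    refine (Finset.sum_subtype (p := ValidF n v u) (F := Subtype.fintype _)
      (Finset.univ.filter (ValidF n v u)) (fun x => by simp)
      (fun d => (Nat.card (Plausible n v u F (F d.1 d.2.1 d.2.2) i) : ℝ))).trans ?_
    exact Finset.sum_congr rfl (fun a _ => rfl)
  have hRHS : ∑ p, w0 * x p
      = (∑ p : Fin (K n) × {d : FData n v u // ValidF n v u d}, x p) / (k * N) := by
    rw [← Finset.mul_sum, hw0def]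
    field_simp
  have hNatCard : (Nat.card {d : FData n v u // ValidF n v u d} : ℝ) = N := by
    rw [hNdef, Nat.card_eq_fintype_card]
  rw [hNatCard, hEsum]
  calc (((u : ℝ) - (n : ℝ) / 2) / ((n : ℝ) / 2)) *
        2 ^ (-(2 * S - 2 * (n : ℝ) * v) / n - 1)
      = 2 ^ ((Real.logb 2 N - S) / k) := hLHS
    _ ≤ 2 ^ (∑ p, w0 * Real.logb 2 (x p)) :=
        (Real.rpow_le_rpow_left_iff (by norm_num : (1 : ℝ) < 2)).mpr hexp
    _ = ∏ p, x p ^ w0 := hprod.symm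
    _ ≤ ∑ p, w0 * x p := hAM
    _ = _ := hRHS

end ClaimProof

end DynRetrieval

namespace DynRetrieval

/-- **Claim 4.6.** There is an absolute constant `c > 0` such that for every
deterministic dynamic retrieval scheme `(F, G, Query)` in the model and every real
`S ≥ H(F)`: if `i` is drawn uniformly from `{1, …, n/2}`, independently of the process,
then the expected size of the plausible set satisfies
`E_{i, A, R_A, R_{B₀}}[ |P_i(F(A, R_A, R_{B₀}))| ] ≥ ((u − n/2)/(n/2)) · 2^{−(2S − 2nv)/n − c}`.

(The marginal distribution of `(A, R_A, R_{B₀})` is the uniform distribution on its valid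
realizations; the expectation is written out as the corresponding average.) -/
theorem dynamic_plausible_set_expected_size :
    ∃ c : ℝ, 0 < c ∧
      ∀ n v u : ℕ, Hyp n v u →
      ∀ (F : FBuilder n v u) (G : GBuilder n v u) (Q : QueryFn v),
        Correct n v u F G Q →
      ∀ S : ℝ, entropy (Frv n v u F) ≤ S →
        (((u : ℝ) - (n : ℝ) / 2) / ((n : ℝ) / 2)) *
            2 ^ (-(2 * S - 2 * (n : ℝ) * v) / n - c) ≤
          (∑ i : Fin (K n), ∑ d : FData n v u,
              Set.indicator {d | ValidF n v u d}
                (fun d => (Nat.card (Plausible n v u F (F d.1 d.2.1 d.2.2) i) : ℝ)) d) /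
            ((K n : ℝ) * (Nat.card {d : FData n v u // ValidF n v u d} : ℝ)) := by
  exact ⟨1, one_pos, fun n v u h F G Q _ S hS => main_ineq h F S hS⟩

end DynRetrieval
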